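/- Let Λ = (Λ_a)_{a∈A} be an instrument on ℂ^d given in Kraus form, let F_S be a set of density matrices on ℂ^d, and let F_E = { (Λ_a(σ))_{a∈A} : σ ∈ F_S } be the set of state ensembles obtained by applying the instrument to free states. Define the ensemble robustness of the ensemble (Λ_a(ρ))_a by R_ens((Λ_a(ρ))) = inf{ t ≥ 0 : there exists a density matrix τ on ℂ^d with (Λ_a(ρ) + t Λ_a(τ))/(1+t) ∈ F_E componentwise }, and the state robustness R_S(ρ) = inf{ t ≥ 0 : there exists a density matrix τ with (ρ + t τ)/(1+t) ∈ F_S }. Then for every density matrix ρ on ℂ^d, R_ens((Λ_a(ρ))) ≤ R_S(ρ). -/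
import Mathlib


open Matrix BigOperators ComplexOrder ENNReal

noncomputable section

/-- A density matrix on `ℂ^d`: positive semidefinite with unit trace. -/
def IsDensity {d : ℕ} (ρ : Matrix (Fin d) (Fin d) ℂ) : Prop :=
  ρ.PosSemidef ∧ ρ.trace = 1

/-- An instrument in Kraus form with outcome set `A`: Kraus operators summing to a
trace-preserving map. -/
def IsInstrument {d : ℕ} {A : Type*} [Fintype A] {m : ℕ}
    (K : A → Fin m → Matrix (Fin d) (Fin d) ℂ) : Prop :=
  ∑ a, ∑ k, (K a k)ᴴ * K a k = 1

/-- The subchannel `Λ_a` of an instrument in Kraus form. -/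
def subCh {d : ℕ} {A : Type*} {m : ℕ} (K : A → Fin m → Matrix (Fin d) (Fin d) ℂ)
    (a : A) (τ : Matrix (Fin d) (Fin d) ℂ) : Matrix (Fin d) (Fin d) ℂ :=
  ∑ k, K a k * τ * (K a k)ᴴ

/-- Robustness (valued in `ℝ≥0∞`, with `inf ∅ = ∞`) of the state ensemble `(Λ_a ρ)_a`
with respect to the set of ensembles produced by the instrument `K` from states in `FS`,
where the noise is also restricted to ensembles produced by the instrument. -/
def EnsembleRobustness {d : ℕ} {A : Type*} [Fintype A] {m : ℕ}
    (K : A → Fin m → Matrix (Fin d) (Fin d) ℂ)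
    (FS : Set (Matrix (Fin d) (Fin d) ℂ)) (ρ : Matrix (Fin d) (Fin d) ℂ) : ℝ≥0∞ :=
  sInf { s : ℝ≥0∞ | ∃ t : ℝ, 0 ≤ t ∧ s = ENNReal.ofReal t ∧
    ∃ τ : Matrix (Fin d) (Fin d) ℂ, IsDensity τ ∧
      (fun a => (1 + t)⁻¹ • (subCh K a ρ + t • subCh K a τ)) ∈
        (fun σ => fun a => subCh K a σ) '' FS }

/-- Robustness (valued in `ℝ≥0∞`, with `inf ∅ = ∞`) of a state with respect to a free set
`FS` of states. -/
def StateRobustness {d : ℕ} (FS : Set (Matrix (Fin d) (Fin d) ℂ))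
    (ρ : Matrix (Fin d) (Fin d) ℂ) : ℝ≥0∞ :=
  sInf { s : ℝ≥0∞ | ∃ t : ℝ, 0 ≤ t ∧ s = ENNReal.ofReal t ∧
    ∃ τ : Matrix (Fin d) (Fin d) ℂ, IsDensity τ ∧ (1 + t)⁻¹ • (ρ + t • τ) ∈ FS }

lemma subCh_add {d : ℕ} {A : Type*} {m : ℕ} (K : A → Fin m → Matrix (Fin d) (Fin d) ℂ)
    (a : A) (x y : Matrix (Fin d) (Fin d) ℂ) :
    subCh K a (x + y) = subCh K a x + subCh K a y := by
  simp [subCh, mul_add, add_mul, Finset.sum_add_distrib]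

lemma subCh_smul {d : ℕ} {A : Type*} {m : ℕ} (K : A → Fin m → Matrix (Fin d) (Fin d) ℂ)
    (a : A) (c : ℝ) (x : Matrix (Fin d) (Fin d) ℂ) :
    subCh K a (c • x) = c • subCh K a x := by
  simp [subCh, Finset.smul_sum, mul_smul_comm, smul_mul_assoc]

/-- The robustness of the ensemble obtained by applying an instrument to a state `ρ`,
relative to the ensembles obtained from free states, is at most the robustness of `ρ`
relative to the free states. -/
theorem ensembleRobustness_le_stateRobustness
    {d : ℕ} {A : Type*} [Fintype A] {m : ℕ}
    (K : A → Fin m → Matrix (Fin d) (Fin d) ℂ) (hK : IsInstrument K)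
    (FS : Set (Matrix (Fin d) (Fin d) ℂ)) (hFS : ∀ σ ∈ FS, IsDensity σ)
    (ρ : Matrix (Fin d) (Fin d) ℂ) (hρ : IsDensity ρ) :
    EnsembleRobustness K FS ρ ≤ StateRobustness FS ρ := by
  apply sInf_le_sInf
  rintro s ⟨t, ht, hs, τ, hτ, hmem⟩
  refine ⟨t, ht, hs, τ, hτ, ⟨(1 + t)⁻¹ • (ρ + t • τ), hmem, ?_⟩⟩
  funext a
  show subCh K a ((1 + t)⁻¹ • (ρ + t • τ)) = _
  rw [subCh_smul, subCh_add, subCh_smul]
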